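/- Let E be a real inner product space and let y, w₁, w₂ ∈ E satisfy ‖y‖ = ‖w₁‖ = ‖w₂‖ = 1 and ⟪y, w₁⟫ = ⟪y, w₂⟫ = 0. Let d₁, d₂ ∈ ℝ with 0 < d₂ ≤ d₁ < π/2, and assume it is not the case that both d₁ = d₂ and w₁ = w₂. Define the unit-sphere geodesics γᵢ(t) = cos(dᵢ·t) • y + sin(dᵢ·t) • wᵢ for i = 1, 2. Then the function t ↦ ⟪γ₁(t), γ₂(t)⟫ is strictly decreasing on the interval [0, 1]. -/

import Mathlib

open Real
open scoped RealInnerProductSpace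

theorem stmt_5 {E : Type*} [NormedAddCommGroup E] [InnerProductSpace ℝ E]
    (y w₁ w₂ : E) (hy : ‖y‖ = 1) (hw₁ : ‖w₁‖ = 1) (hw₂ : ‖w₂‖ = 1)
    (hyw₁ : ⟪y, w₁⟫ = 0) (hyw₂ : ⟪y, w₂⟫ = 0)
    (d₁ d₂ : ℝ) (hd₂ : 0 < d₂) (hd₂₁ : d₂ ≤ d₁) (hd₁ : d₁ < π / 2)
    (hne : ¬(d₁ = d₂ ∧ w₁ = w₂)) :
    StrictAntiOn
      (fun t : ℝ =>
        ⟪Real.cos (d₁ * t) • y + Real.sin (d₁ * t) • w₁,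
          Real.cos (d₂ * t) • y + Real.sin (d₂ * t) • w₂⟫)
      (Set.Icc (0 : ℝ) 1) := by
  set c : ℝ := ⟪w₁, w₂⟫ with hc
  have hyy : ⟪y, y⟫ = 1 := by
    rw [real_inner_self_eq_norm_sq, hy]; norm_num
  have hw₁y : ⟪w₁, y⟫ = 0 := by rw [real_inner_comm]; exact hyw₁
  have hcle : c ≤ 1 := by
    have := real_inner_le_norm w₁ w₂
    rwa [hw₁, hw₂, one_mul] at this
  have key : ∀ t : ℝ,
      ⟪Real.cos (d₁ * t) • y + Real.sin (d₁ * t) • w₁,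
        Real.cos (d₂ * t) • y + Real.sin (d₂ * t) • w₂⟫
      = ((1 + c) / 2) * Real.cos ((d₁ - d₂) * t)
        + ((1 - c) / 2) * Real.cos ((d₁ + d₂) * t) := by
    intro t
    have h1 : (d₁ - d₂) * t = d₁ * t - d₂ * t := by ring
    have h2 : (d₁ + d₂) * t = d₁ * t + d₂ * t := by ring
    rw [h1, h2, Real.cos_sub, Real.cos_add]
    simp only [inner_add_left, inner_add_right, real_inner_smul_left,
      real_inner_smul_right, hyy, hyw₂, hw₁y, ← hc]
    ring
  have hpi : d₁ + d₂ < π := by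
    have hpi2 : d₂ < π / 2 := lt_of_le_of_lt hd₂₁ hd₁
    linarith
  intro s hs t ht hst
  simp only [key]
  obtain ⟨hs0, hs1⟩ := hs
  obtain ⟨ht0, ht1⟩ := ht
  have hcosle : Real.cos ((d₁ - d₂) * t) ≤ Real.cos ((d₁ - d₂) * s) := by
    apply Real.cos_le_cos_of_nonneg_of_le_pi
    · exact mul_nonneg (by linarith) hs0
    · calc (d₁ - d₂) * t ≤ (d₁ - d₂) * 1 := by nlinarith
        _ ≤ π := by nlinarith [Real.pi_pos]
    · nlinarith
  rcases lt_or_eq_of_le hcle with hlt | heq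
  · -- c < 1 : the second term is strictly decreasing
    have hstrict : Real.cos ((d₁ + d₂) * t) < Real.cos ((d₁ + d₂) * s) := by
      apply Real.cos_lt_cos_of_nonneg_of_le_pi
      · exact mul_nonneg (by linarith) hs0
      · nlinarith
      · nlinarith
    have hA : 0 ≤ (1 + c) / 2 := by
      have h := abs_real_inner_le_norm w₁ w₂
      rw [hw₁, hw₂, one_mul] at h
      have := abs_le.mp h
      linarith [this.1]
    nlinarith
  · -- c = 1 : w₁ = w₂, so d₁ ≠ d₂
    have hw : w₁ = w₂ := by
      have := inner_eq_one_iff_of_norm_eq_one (𝕜 := ℝ) hw₁ hw₂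
      exact this.mp (hc.symm.trans heq)
    have hdd : d₂ < d₁ := by
      rcases lt_or_eq_of_le hd₂₁ with h | h
      · exact h
      · exact absurd ⟨h.symm, hw⟩ hne
    have hstrict : Real.cos ((d₁ - d₂) * t) < Real.cos ((d₁ - d₂) * s) := by
      apply Real.cos_lt_cos_of_nonneg_of_le_pi
      · exact mul_nonneg (by linarith) hs0
      · nlinarith [Real.pi_pos]
      · nlinarith
    rw [← heq]
    nlinarith
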